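/- Let L be a Lie ideal in the upper triangular matrix algebra Tₙ. Then L is similarity invariant: for every invertible t ∈ Tₙ and x ∈ L, t⁻¹xt ∈ L. -/

import Mathlib

open Matrix Finset

/-- Conjugation by a unipotent upper triangular matrix whose columns with index `≥ m`
agree with the identity preserves a Lie ideal `L`. -/
private lemma unip_conj {n : ℕ} (L : Submodule ℂ (Matrix (Fin n) (Fin n) ℂ))
    (hLsub : ∀ x ∈ L, ∀ i j : Fin n, j < i → x i j = 0)
    (hLie : ∀ x ∈ L, ∀ a : Matrix (Fin n) (Fin n) ℂ,
      (∀ i j : Fin n, j < i → a i j = 0) → x * a - a * x ∈ L) :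
    ∀ m : ℕ, ∀ u : Matrix (Fin n) (Fin n) ℂ,
      (∀ i j : Fin n, j < i → u i j = 0) →
      (∀ i : Fin n, u i i = 1) →
      (∀ i j : Fin n, m ≤ (j : ℕ) → u i j = if i = j then 1 else 0) →
      ∃ v : Matrix (Fin n) (Fin n) ℂ,
        u * v = 1 ∧ v * u = 1 ∧ ∀ x ∈ L, v * x * u ∈ L := by
  intro m
  induction m with
  | zero =>
    intro u hUT hdiag hcol
    have hu : u = 1 := by
      ext i j
      rw [hcol i j (Nat.zero_le _)]
      simp [Matrix.one_apply]
    refine ⟨1, by simp [hu], by simp [hu], fun x hx => by simpa [hu] using hx⟩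
  | succ m ih =>
    intro u hUT hdiag hcol
    by_cases hm : m < n
    · set c : Fin n := ⟨m, hm⟩ with hc
      set w : Matrix (Fin n) (Fin n) ℂ :=
        Matrix.of (fun i j => if j = c ∧ i < c then u i j else 0) with hwdef
      have hw_apply : ∀ i j, w i j = if j = c ∧ i < c then u i j else 0 := fun i j => rfl
      have hwUT : ∀ i j : Fin n, j < i → w i j = 0 := by
        intro i j hji
        rw [hw_apply]
        have : ¬(j = c ∧ i < c) := by
          rintro ⟨rfl, h2⟩; exact absurd (hji.trans h2) (lt_irrefl _)
        simp [this]
      have hrowc : ∀ j, u c j = if c = j then 1 else 0 := by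
        intro j
        rcases lt_trichotomy j c with h | h | h
        · rw [hUT c j h, if_neg (by exact fun hcj => absurd (hcj ▸ h) (lt_irrefl _))]
        · rw [h, hdiag, if_pos rfl]
        · have hj : m + 1 ≤ (j : ℕ) := by
            have := h
            simp only [Fin.lt_def] at this
            exact Nat.succ_le_of_lt this
          rw [hcol c j hj]
      have hwu : w * u = w := by
        ext i j
        rw [Matrix.mul_apply, Finset.sum_eq_single c
          (fun b _ hb => by rw [hw_apply]; simp [hb]) (by simp)]
        rw [hrowc j, hw_apply, hw_apply]
        by_cases hj : j = c
        · subst hj; simp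
        · have : ¬ (c = j) := fun h => hj h.symm
          simp [hj, this]
      have hww : w * w = 0 := by
        ext i j
        rw [Matrix.mul_apply]
        apply Finset.sum_eq_zero
        intro k _
        by_cases hk : k = c
        · subst hk
          have : w c j = 0 := by
            rw [hw_apply]; simp [lt_irrefl]
          rw [this, mul_zero]
        · rw [hw_apply]; simp [hk]
      have hwxw : ∀ x ∈ L, w * x * w = 0 := by
        intro x hx
        ext i j
        rw [Matrix.mul_apply]
        apply Finset.sum_eq_zero
        intro k _
        by_cases hk : j = c ∧ k < c
        · have hwx : (w * x) i k = 0 := by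
            rw [Matrix.mul_apply]
            apply Finset.sum_eq_zero
            intro l _
            by_cases hl : l = c
            · subst hl
              rw [hLsub x hx c k hk.2, mul_zero]
            · rw [hw_apply]; simp [hl]
          rw [hwx, zero_mul]
        · rw [hw_apply k j, if_neg hk, mul_zero]
      have hfac : (1 + w) * (u - w) = u := by
        have h1 : (1 + w) * (u - w) = u - w + (w * u - w * w) := by noncomm_ring
        rw [h1, hwu, hww, sub_zero]
        abel
      have hinv1 : (1 + w) * (1 - w) = 1 := by
        have h : (1 + w) * (1 - w) = 1 - w * w := by noncomm_ring
        rw [h, hww, sub_zero]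
      have hinv2 : (1 - w) * (1 + w) = 1 := by
        have h : (1 - w) * (1 + w) = 1 - w * w := by noncomm_ring
        rw [h, hww, sub_zero]
      -- The matrix `u - w` has columns with index `≥ m` agreeing with the identity.
      have hUT' : ∀ i j : Fin n, j < i → (u - w) i j = 0 := by
        intro i j h
        simp [Matrix.sub_apply, hUT i j h, hwUT i j h]
      have hdiag' : ∀ i : Fin n, (u - w) i i = 1 := by
        intro i
        have hwii : w i i = 0 := by
          rw [hw_apply]
          have : ¬(i = c ∧ i < c) := by rintro ⟨rfl, h2⟩; exact absurd h2 (lt_irrefl _)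
          simp [this]
        simp [Matrix.sub_apply, hdiag i, hwii]
      have hcol' : ∀ i j : Fin n, m ≤ (j : ℕ) → (u - w) i j = if i = j then 1 else 0 := by
        intro i j hj
        by_cases hjc : j = c
        · subst hjc
          by_cases hic : i = c
          · subst hic
            have hwcc : w c c = 0 := by
              rw [hw_apply]; simp [lt_irrefl]
            simp [Matrix.sub_apply, hdiag c, hwcc]
          · rcases lt_or_gt_of_ne (show i ≠ c from hic) with h | h
            · rw [Matrix.sub_apply, hw_apply, if_pos ⟨rfl, h⟩, sub_self, if_neg hic]
            · rw [Matrix.sub_apply, hUT i c h, hw_apply,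
                if_neg (by rintro ⟨_, h2⟩; exact absurd (h.trans h2) (lt_irrefl _)),
                sub_zero, if_neg hic]
        · have hj' : m + 1 ≤ (j : ℕ) := by
            have : (j : ℕ) ≠ m := fun h => hjc (Fin.ext h)
            omega
          have hwij : w i j = 0 := by
            rw [hw_apply]; simp [hjc]
          rw [Matrix.sub_apply, hcol i j hj', hwij, sub_zero]
      obtain ⟨v', huv', hvu', hconj'⟩ := ih (u - w) hUT' hdiag' hcol'
      refine ⟨v' * (1 - w), ?_, ?_, ?_⟩
      · conv_lhs => rw [← hfac]
        rw [mul_assoc, ← mul_assoc (u - w), huv', one_mul, hinv1]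
      · conv_lhs => rw [← hfac]
        rw [mul_assoc v', ← mul_assoc (1 - w), hinv2, one_mul, hvu']
      · intro x hx
        have hy : (1 - w) * x * (1 + w) = x + (x * w - w * x) := by
          have h : (1 - w) * x * (1 + w) = x + (x * w - w * x) - w * x * w := by
            noncomm_ring
          rw [h, hwxw x hx, sub_zero]
        have hyL : x + (x * w - w * x) ∈ L := L.add_mem hx (hLie x hx w hwUT)
        have heq : ∀ z : Matrix (Fin n) (Fin n) ℂ,
            v' * (1 - w) * x * ((1 + w) * z) = v' * ((1 - w) * x * (1 + w)) * z := by
          intro z; noncomm_ring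
        have h2 := heq (u - w)
        rw [hfac] at h2
        rw [h2, hy]
        exact hconj' _ hyL
    · exact ih u hUT hdiag (fun i j hj => absurd j.isLt (by omega))

/-- Conjugation by an invertible diagonal matrix preserves a Lie ideal `L`. -/
private lemma diag_conj {n : ℕ} (L : Submodule ℂ (Matrix (Fin n) (Fin n) ℂ))
    (hLie : ∀ x ∈ L, ∀ a : Matrix (Fin n) (Fin n) ℂ,
      (∀ i j : Fin n, j < i → a i j = 0) → x * a - a * x ∈ L)
    (δ : Fin n → ℂ) (hδ : ∀ i, δ i ≠ 0) :
    ∀ m : ℕ, ∀ x ∈ L,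
      (Matrix.of fun i j : Fin n =>
        ((if (j : ℕ) < m then δ j else 1) / (if (i : ℕ) < m then δ i else 1)) * x i j) ∈ L := by
  intro m
  induction m with
  | zero =>
    intro x hx
    have h : (Matrix.of fun i j : Fin n =>
        ((if (j : ℕ) < 0 then δ j else 1) / (if (i : ℕ) < 0 then δ i else 1)) * x i j) = x := by
      ext i j; simp
    rwa [h]
  | succ m ih =>
    intro x hx
    by_cases hm : m < n
    · set c : Fin n := ⟨m, hm⟩ with hc
      set y : Matrix (Fin n) (Fin n) ℂ := Matrix.of fun i j : Fin n =>
        ((if (j : ℕ) < m then δ j else 1) / (if (i : ℕ) < m then δ i else 1)) * x i j with hy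
      have hy_apply : ∀ i j, y i j =
          ((if (j : ℕ) < m then δ j else 1) / (if (i : ℕ) < m then δ i else 1)) * x i j :=
        fun i j => rfl
      have hyL : y ∈ L := ih x hx
      set E : Matrix (Fin n) (Fin n) ℂ :=
        Matrix.of (fun i j => if i = c ∧ j = c then (1 : ℂ) else 0) with hE
      have hE_apply : ∀ i j, E i j = if i = c ∧ j = c then (1 : ℂ) else 0 := fun i j => rfl
      have hEUT : ∀ i j : Fin n, j < i → E i j = 0 := by
        intro i j hij
        rw [hE_apply]
        have : ¬(i = c ∧ j = c) := by
          rintro ⟨rfl, rfl⟩; exact absurd hij (lt_irrefl _)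
        simp [this]
      -- entry formula for brackets with E
      have hbr : ∀ (z : Matrix (Fin n) (Fin n) ℂ) (i j : Fin n),
          (z * E - E * z) i j =
            ((if j = c then (1 : ℂ) else 0) - (if i = c then (1 : ℂ) else 0)) * z i j := by
        intro z i j
        have h1 : (z * E) i j = z i c * (if j = c then (1 : ℂ) else 0) := by
          rw [Matrix.mul_apply, Finset.sum_eq_single c
            (fun b _ hb => by rw [hE_apply]; simp [hb]) (by simp)]
          rw [hE_apply]
          by_cases hj : j = c <;> simp [hj]
        have h2 : (E * z) i j = (if i = c then (1 : ℂ) else 0) * z c j := by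
          rw [Matrix.mul_apply, Finset.sum_eq_single c
            (fun b _ hb => by rw [hE_apply]; simp [hb]) (by simp)]
          rw [hE_apply]
          by_cases hi : i = c <;> simp [hi]
        rw [Matrix.sub_apply, h1, h2]
        by_cases hj : j = c <;> by_cases hi : i = c
        · subst hj; subst hi; ring
        · subst hj; simp [hi]
        · subst hi; simp [hj]
        · simp [hi, hj]
      set z : Matrix (Fin n) (Fin n) ℂ :=
        y + ((δ c - (δ c)⁻¹) / 2) • (y * E - E * y)
          + ((δ c + (δ c)⁻¹) / 2 - 1) • ((y * E - E * y) * E - E * (y * E - E * y)) with hz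
      have hzL : z ∈ L := by
        have h1 : y * E - E * y ∈ L := hLie y hyL E hEUT
        have h2 : (y * E - E * y) * E - E * (y * E - E * y) ∈ L := hLie _ h1 E hEUT
        exact L.add_mem (L.add_mem hyL (L.smul_mem _ h1)) (L.smul_mem _ h2)
      have hz_apply : ∀ i j, z i j =
          (1 + ((δ c - (δ c)⁻¹) / 2)
              * ((if j = c then (1:ℂ) else 0) - (if i = c then (1:ℂ) else 0))
             + ((δ c + (δ c)⁻¹) / 2 - 1)
              * ((if j = c then (1:ℂ) else 0) - (if i = c then (1:ℂ) else 0)) ^ 2)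
            * y i j := by
        intro i j
        rw [hz]
        simp only [Matrix.add_apply, Matrix.smul_apply, smul_eq_mul]
        rw [hbr y i j, hbr (y * E - E * y) i j, hbr y i j]
        ring
      have hgoal : (Matrix.of fun i j : Fin n =>
          ((if (j : ℕ) < m + 1 then δ j else 1) / (if (i : ℕ) < m + 1 then δ i else 1)) * x i j)
          = z := by
        ext i j
        rw [Matrix.of_apply, hz_apply i j, hy_apply i j]
        have hcm : ¬ ((c : ℕ) < m) := Nat.lt_irrefl m
        have hcm1 : (c : ℕ) < m + 1 := Nat.lt_succ_self m
        by_cases hj : j = c <;> by_cases hi : i = c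
        · subst hj; subst hi
          rw [if_pos (rfl : c = c), if_pos hcm1, if_neg hcm, div_self (hδ c)]
          ring
        · subst hj
          have him : (i : ℕ) ≠ m := fun h => hi (Fin.ext h)
          rw [if_pos (rfl : c = c), if_neg hi, if_pos hcm1, if_neg hcm]
          by_cases hi2 : (i : ℕ) < m
          · rw [if_pos hi2, if_pos (show (i : ℕ) < m + 1 by omega)]
            field_simp [hδ c, hδ i]
            ring
          · rw [if_neg hi2, if_neg (show ¬ ((i : ℕ) < m + 1) by omega)]
            field_simp [hδ c]
            ring
        · subst hi
          have hjm : (j : ℕ) ≠ m := fun h => hj (Fin.ext h)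
          rw [if_pos (rfl : c = c), if_neg hj, if_pos hcm1, if_neg hcm]
          by_cases hj2 : (j : ℕ) < m
          · rw [if_pos hj2, if_pos (show (j : ℕ) < m + 1 by omega)]
            field_simp [hδ c, hδ j]
            ring
          · rw [if_neg hj2, if_neg (show ¬ ((j : ℕ) < m + 1) by omega)]
            field_simp [hδ c]
            ring
        · have him : (i : ℕ) ≠ m := fun h => hi (Fin.ext h)
          have hjm : (j : ℕ) ≠ m := fun h => hj (Fin.ext h)
          have h1 : ((i : ℕ) < m + 1) = ((i : ℕ) < m) := by
            apply propext; constructor <;> (intro; omega)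
          have h2 : ((j : ℕ) < m + 1) = ((j : ℕ) < m) := by
            apply propext; constructor <;> (intro; omega)
          rw [if_neg hi, if_neg hj]
          simp only [h1, h2]
          ring
      rw [hgoal]
      exact hzL
    · have h : (Matrix.of fun i j : Fin n =>
          ((if (j : ℕ) < m + 1 then δ j else 1) / (if (i : ℕ) < m + 1 then δ i else 1)) * x i j)
          = (Matrix.of fun i j : Fin n =>
          ((if (j : ℕ) < m then δ j else 1) / (if (i : ℕ) < m then δ i else 1)) * x i j) := by
        ext i j
        have hi : (i : ℕ) < m := by have := i.isLt; omega
        have hj : (j : ℕ) < m := by have := j.isLt; omega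
        simp only [Matrix.of_apply, if_pos hi, if_pos hj,
          if_pos (show (i : ℕ) < m + 1 by omega), if_pos (show (j : ℕ) < m + 1 by omega)]
      rw [h]
      exact ih x hx

/-- Every Lie ideal `L` of the upper triangular matrix algebra `Tₙ` is
similarity invariant: if `t ∈ Tₙ` is invertible within `Tₙ` (with inverse `s ∈ Tₙ`)
and `x ∈ L`, then `t⁻¹ x t = s * x * t ∈ L`. -/
theorem lie_ideal_similarity_invariant
    {n : ℕ} (L : Submodule ℂ (Matrix (Fin n) (Fin n) ℂ))
    (hLsub : ∀ x ∈ L, ∀ i j : Fin n, j < i → x i j = 0)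
    (hLie : ∀ x ∈ L, ∀ a : Matrix (Fin n) (Fin n) ℂ,
      (∀ i j : Fin n, j < i → a i j = 0) → x * a - a * x ∈ L)
    (t s : Matrix (Fin n) (Fin n) ℂ)
    (ht : ∀ i j : Fin n, j < i → t i j = 0)
    (hs : ∀ i j : Fin n, j < i → s i j = 0)
    (hts : t * s = 1) (hst : s * t = 1) :
    ∀ x ∈ L, s * x * t ∈ L := by
  intro x hx
  have hdet : t.det = ∏ i, t i i :=
    Matrix.det_of_upperTriangular (fun i j hij => ht i j hij)
  have hdetne : t.det ≠ 0 := by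
    intro h
    have h1 := congrArg Matrix.det hts
    rw [Matrix.det_mul, h, zero_mul, Matrix.det_one] at h1
    exact zero_ne_one h1
  have hδ : ∀ i, t i i ≠ 0 := by
    intro i hi
    exact hdetne (by rw [hdet]; exact Finset.prod_eq_zero (Finset.mem_univ i) hi)
  set δ : Fin n → ℂ := fun i => t i i with hδdef
  set d : Matrix (Fin n) (Fin n) ℂ := Matrix.diagonal δ with hd
  set dinv : Matrix (Fin n) (Fin n) ℂ := Matrix.diagonal (fun i => (δ i)⁻¹) with hdinv
  have hdd : d * dinv = 1 := by
    rw [hd, hdinv, Matrix.diagonal_mul_diagonal]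
    have : (fun i => δ i * (δ i)⁻¹) = fun _ => (1 : ℂ) :=
      funext fun i => mul_inv_cancel₀ (hδ i)
    rw [this, Matrix.diagonal_one]
  have hdd' : dinv * d = 1 := by
    rw [hd, hdinv, Matrix.diagonal_mul_diagonal]
    have : (fun i => (δ i)⁻¹ * δ i) = fun _ => (1 : ℂ) :=
      funext fun i => inv_mul_cancel₀ (hδ i)
    rw [this, Matrix.diagonal_one]
  set u : Matrix (Fin n) (Fin n) ℂ := dinv * t with hu
  have huapp : ∀ i j, u i j = (δ i)⁻¹ * t i j := by
    intro i j
    rw [hu, hdinv, Matrix.diagonal_mul]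
  have huUT : ∀ i j : Fin n, j < i → u i j = 0 := fun i j h => by
    rw [huapp, ht i j h, mul_zero]
  have hudiag : ∀ i, u i i = 1 := fun i => by
    rw [huapp]; exact inv_mul_cancel₀ (hδ i)
  obtain ⟨v, huv, hvu, hconj⟩ :=
    unip_conj L hLsub hLie n u huUT hudiag (fun i j hj => absurd j.isLt (by omega))
  have htdu : d * u = t := by
    rw [hu, ← mul_assoc, hdd, one_mul]
  have hts2 : t * (v * dinv) = 1 := by
    rw [← htdu, mul_assoc, ← mul_assoc u v, huv, one_mul, hdd]
  have hseq : s = v * dinv := by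
    calc s = s * (t * (v * dinv)) := by rw [hts2, mul_one]
    _ = (s * t) * (v * dinv) := (mul_assoc _ _ _).symm
    _ = v * dinv := by rw [hst, one_mul]
  have hy := diag_conj L hLie δ hδ n x hx
  have hyeq : (Matrix.of fun i j : Fin n =>
      ((if (j : ℕ) < n then δ j else 1) / (if (i : ℕ) < n then δ i else 1)) * x i j)
      = dinv * x * d := by
    ext i j
    rw [Matrix.of_apply, if_pos j.isLt, if_pos i.isLt]
    have h1 : (dinv * x * d) i j = (dinv * x) i j * δ j := by
      rw [hd, Matrix.mul_diagonal]
    have h2 : (dinv * x) i j = (δ i)⁻¹ * x i j := by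
      rw [hdinv, Matrix.diagonal_mul]
    rw [h1, h2, div_eq_mul_inv]
    ring
  rw [hyeq] at hy
  have hmem := hconj _ hy
  have hfinal : s * x * t = v * (dinv * x * d) * u := by
    rw [hseq, ← htdu]
    noncomm_ring
  rw [hfinal]
  exact hmem
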